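/- If the symmetric 2×2 polynomial matrix Φ has all entries of total degree at most 1 (degree Φ < 2), then in the recursion ψ_i^{(m)} = I₂ ⊗ ψ_i^{(m-1)} + ∇(φ_{1i}, φ_{2i}) ⊗ I_{2^{m-1}} with ψ_i^{(0)}(x,y) = Xᵗ D_i + E_i, the linear-part coefficient matrices satisfy D_i^{(m)} = I_{2^m} ⊗ D_i for all m ≥ 0, where D_i^{(m)} is defined by ψ_i^{(m)}(x,y) = (I_{2^m} ⊗ Xᵗ) D_i^{(m)} + E_i^{(m)}. -/

import Mathlib

open Matrix MvPolynomial
open scoped Kronecker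

noncomputable section

abbrev P2 : Type := MvPolynomial (Fin 2) ℝ

/-- The row vector `Xᵗ = (x, y)`. -/
def XrowOne : Matrix (Fin 1) (Fin 2) P2 := Matrix.of fun _ j => X j

/-- `∇(φ_{1,c}, φ_{2,c})`, the `2 × 2` polynomial matrix whose columns are the
gradients of the entries of the `c`-th column of `Φ`. -/
def gradPairP (Φ : Matrix (Fin 2) (Fin 2) P2) (c : Fin 2) : Matrix (Fin 2) (Fin 2) P2 :=
  Matrix.of fun a b => pderiv a (Φ b c)

/-- The recursively defined matrix polynomials
`ψ^{(0)} = ψ₀`, `ψ^{(m)} = I₂ ⊗ ψ^{(m-1)} + ∇(φ_{1,c}, φ_{2,c}) ⊗ I_{2^{m-1}}`. -/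
def psiRec (Φ : Matrix (Fin 2) (Fin 2) P2) (ψ0 : P2) (c : Fin 2) :
    (m : ℕ) → Matrix (Fin (2 ^ m)) (Fin (2 ^ m)) P2
  | 0 => Matrix.of fun _ _ => ψ0
  | (m + 1) =>
      Matrix.reindex (finProdFinEquiv.trans (finCongr (by ring)))
        (finProdFinEquiv.trans (finCongr (by ring)))
        ((1 : Matrix (Fin 2) (Fin 2) P2) ⊗ₖ psiRec Φ ψ0 c m
          + gradPairP Φ c ⊗ₖ (1 : Matrix (Fin (2 ^ m)) (Fin (2 ^ m)) P2))

/-- The column vector `D ∈ ℝ²` as a `2 × 1` matrix. -/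
def colVec (D : Fin 2 → ℝ) : Matrix (Fin 2) (Fin 1) ℝ := Matrix.of fun i _ => D i

/-- The partial derivative of a polynomial of total degree at most one is constant. -/
lemma pderiv_isC (a : Fin 2) (p : P2) (h : p.totalDegree ≤ 1) : ∃ r : ℝ, pderiv a p = C r := by
  have : ∀ m ∈ p.support, ∃ r : ℝ, pderiv a (monomial m (coeff m p)) = C r := by
    intro m hm
    have hsum : m 0 + m 1 ≤ 1 := by
      have := MvPolynomial.le_totalDegree hm
      have h2 : (m.sum fun _ e => e) = m 0 + m 1 := by
        rw [Finsupp.sum_fintype _ _ (fun _ => rfl), Fin.sum_univ_two]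
      omega
    have ha : a = 0 ∨ a = 1 := by fin_cases a <;> simp
    rw [pderiv_monomial]
    rcases Nat.eq_zero_or_pos (m a) with h0 | h1
    · exact ⟨0, by simp [h0]⟩
    · have hm1 : m a = 1 := by rcases ha with rfl | rfl <;> omega
      have hz : m - Finsupp.single a 1 = 0 := by
        ext b
        have hb : b = 0 ∨ b = 1 := by fin_cases b <;> simp
        simp only [Finsupp.coe_tsub, Pi.sub_apply, Finsupp.coe_zero, Pi.zero_apply,
          Finsupp.single_apply]
        rcases ha with rfl | rfl <;> rcases hb with rfl | rfl <;> simp_all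
      rw [hz, hm1]
      exact ⟨coeff m p * 1, by simp [monomial_zero']⟩
  choose r hr using this
  refine ⟨∑ m ∈ p.support.attach, r m m.2, ?_⟩
  conv_lhs => rw [p.as_sum]
  rw [map_sum, map_sum, ← Finset.sum_attach p.support (fun m => pderiv a (monomial m (coeff m p)))]
  exact Finset.sum_congr rfl fun m _ => hr m m.2

/-- The quadratic form `(I ⊗ Xᵗ)(I ⊗ D)` picked out by the diagonal submatrix is the
scalar polynomial `D₀ x + D₁ y` times the identity. -/
lemma submatrix_kron_eq (D : Fin 2 → ℝ) (n : ℕ) :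
    (((1 : Matrix (Fin n) (Fin n) P2) ⊗ₖ XrowOne)
        * ((1 : Matrix (Fin n) (Fin n) ℝ) ⊗ₖ colVec D).map MvPolynomial.C).submatrix
        (fun i => (i, (0 : Fin 1))) (fun j => (j, (0 : Fin 1)))
      = (MvPolynomial.C (D 0) * X 0 + MvPolynomial.C (D 1) * X 1 : P2) •
          (1 : Matrix (Fin n) (Fin n) P2) := by
  apply Matrix.ext; intro i j
  erw [Matrix.submatrix_apply, CStarMatrix.mul_apply]
  simp only [Matrix.submatrix_apply, Matrix.mul_apply, Fintype.sum_prod_type, Fin.sum_univ_two,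
    Matrix.map_apply, kroneckerMap_apply, XrowOne, colVec, Matrix.of_apply, Matrix.one_apply,
    Matrix.smul_apply, smul_eq_mul]
  simp only [ite_mul, one_mul, zero_mul, mul_ite, mul_one, mul_zero, apply_ite MvPolynomial.C,
    map_zero]
  rw [Finset.sum_add_distrib, Finset.sum_ite_eq' Finset.univ j, Finset.sum_ite_eq' Finset.univ j]
  simp only [Finset.mem_univ, if_true]
  split_ifs <;> ring

/-- Main induction: `ψ^{(m)}` equals `(D₀x + D₁y) • I + (constant matrix)`. -/
lemma psiRec_eq_smul_one_add_const (Φ : Matrix (Fin 2) (Fin 2) P2)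
    (hΦ : ∀ i j, (Φ i j).totalDegree ≤ 1)
    (D : Fin 2 → ℝ) (E : ℝ) (c : Fin 2) (m : ℕ) :
    ∃ Em : Matrix (Fin (2 ^ m)) (Fin (2 ^ m)) ℝ,
      psiRec Φ (MvPolynomial.C (D 0) * X 0 + MvPolynomial.C (D 1) * X 1
          + MvPolynomial.C E) c m
        = (MvPolynomial.C (D 0) * X 0 + MvPolynomial.C (D 1) * X 1 : P2) •
            (1 : Matrix (Fin (2 ^ m)) (Fin (2 ^ m)) P2) + Em.map MvPolynomial.C := by
  obtain ⟨G, hG⟩ : ∃ G : Matrix (Fin 2) (Fin 2) ℝ, gradPairP Φ c = G.map MvPolynomial.C := by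
    choose g hg using fun a b => pderiv_isC a (Φ b c) (hΦ b c)
    exact ⟨Matrix.of g, by apply Matrix.ext; intro a b; simp [gradPairP, hg]⟩
  induction m with
  | zero =>
      refine ⟨Matrix.of fun _ _ => E, ?_⟩
      apply Matrix.ext; intro i j
      simp [psiRec, Matrix.one_apply, show i = j by omega]
  | succ m ih =>
      obtain ⟨Em, hEm⟩ := ih
      refine ⟨Matrix.reindex (finProdFinEquiv.trans (finCongr (by ring)))
        (finProdFinEquiv.trans (finCongr (by ring)))
        ((1 : Matrix (Fin 2) (Fin 2) ℝ) ⊗ₖ Em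
          + G ⊗ₖ (1 : Matrix (Fin (2 ^ m)) (Fin (2 ^ m)) ℝ)), ?_⟩
      apply Matrix.ext; intro i j
      rw [psiRec, hEm, hG]
      set e := (finProdFinEquiv.trans (finCongr (by ring : 2 * 2 ^ m = 2 ^ (m + 1)))) with he
      have hij : (i = j) ↔ ((e.symm i).1 = (e.symm j).1 ∧ (e.symm i).2 = (e.symm j).2) := by
        rw [← Prod.ext_iff]
        exact (Equiv.apply_eq_iff_eq e.symm).symm
      simp only [Matrix.reindex_apply, Matrix.submatrix_apply, Matrix.add_apply,
        Matrix.map_apply, kroneckerMap_apply, Matrix.smul_apply, smul_eq_mul,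
        Matrix.one_apply, map_add, _root_.map_mul, hij]
      split_ifs <;> simp_all <;> ring

/-- If all entries of `Φ` have total degree at most `1` (`degree Φ < 2`), then the
linear part of `ψ^{(m)}` is given by `D^{(m)} = I_{2^m} ⊗ D`, i.e.
`ψ^{(m)} = (I_{2^m} ⊗ Xᵗ)(I_{2^m} ⊗ D) + E^{(m)}` for some constant matrix
`E^{(m)}`. -/
theorem psiRec_linear_part
    (Φ : Matrix (Fin 2) (Fin 2) P2) (hΦ : ∀ i j, (Φ i j).totalDegree ≤ 1)
    (D : Fin 2 → ℝ) (E : ℝ) (c : Fin 2) (m : ℕ) :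
    ∃ Em : Matrix (Fin (2 ^ m)) (Fin (2 ^ m)) ℝ,
      psiRec Φ (MvPolynomial.C (D 0) * X 0 + MvPolynomial.C (D 1) * X 1
          + MvPolynomial.C E) c m
        = (((1 : Matrix (Fin (2 ^ m)) (Fin (2 ^ m)) P2) ⊗ₖ XrowOne)
            * ((1 : Matrix (Fin (2 ^ m)) (Fin (2 ^ m)) ℝ) ⊗ₖ colVec D).map
                MvPolynomial.C).submatrix (fun i => (i, (0 : Fin 1)))
            (fun j => (j, (0 : Fin 1)))
          + Em.map MvPolynomial.C := by
  obtain ⟨Em, hEm⟩ := psiRec_eq_smul_one_add_const Φ hΦ D E c m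
  exact ⟨Em, by rw [submatrix_kron_eq]; exact hEm⟩

end
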